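/- (Uniform law of large numbers for Monte-Carlo integration over an RKHS ball.) Let X be a measurable space with probability measure P, let H be a real Hilbert space, and let Φ : X → H be a strongly measurable feature map inducing the kernel k(x,y) := ⟨Φ(x), Φ(y)⟩_H; the RKHS functions are f_h(x) := ⟨h, Φ(x)⟩_H for h ∈ H. Assume C² := E[k(X,X)] = E‖Φ(X)‖² < ∞ for X ∼ P, and let X₁, …, X_n be i.i.d. with law P. Then for every B > 0, E[ sup_{h ∈ H, ‖h‖ ≤ B} | (1/n) Σ_{i=1}^n f_h(X_i) − E[f_h(X)] | ] ≤ 4 B C / √n. -/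

import Mathlib

open MeasureTheory

local notation "⟪" x ", " y "⟫" => @inner ℝ _ _ x y

open Set Function

lemma aux_sSup {H : Type*} [NormedAddCommGroup H] [InnerProductSpace ℝ H]
    (B : ℝ) (hB : 0 < B) (v : H) :
    sSup {r : ℝ | ∃ h : H, ‖h‖ ≤ B ∧ r = |⟪h, v⟫|} = B * ‖v‖ := by
  have hne : ((0:ℝ)) ∈ {r : ℝ | ∃ h : H, ‖h‖ ≤ B ∧ r = |⟪h, v⟫|} :=
    ⟨0, by simp [hB.le]⟩
  have hub : ∀ r ∈ {r : ℝ | ∃ h : H, ‖h‖ ≤ B ∧ r = |⟪h, v⟫|}, r ≤ B * ‖v‖ := by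
    rintro r ⟨h, hh, rfl⟩
    calc |⟪h, v⟫| ≤ ‖h‖ * ‖v‖ := abs_real_inner_le_norm h v
    _ ≤ B * ‖v‖ := by gcongr
  refine le_antisymm (csSup_le ⟨0, hne⟩ hub) ?_
  rcases eq_or_ne v 0 with rfl | hv
  · rw [norm_zero, mul_zero]
    exact le_csSup ⟨B * ‖(0:H)‖, hub⟩ hne
  · have hmem : B * ‖v‖ ∈ {r : ℝ | ∃ h : H, ‖h‖ ≤ B ∧ r = |⟪h, v⟫|} := by
      refine ⟨(B / ‖v‖) • v, ?_, ?_⟩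
      · have : ‖(B / ‖v‖) • v‖ = B := by
          rw [norm_smul, Real.norm_eq_abs, abs_of_pos (div_pos hB (norm_pos_iff.mpr hv)),
            div_mul_cancel₀ _ (norm_ne_zero_iff.mpr hv)]
        exact this.le
      · rw [real_inner_smul_left, real_inner_self_eq_norm_sq]
        rw [abs_of_nonneg]
        · have hv' : ‖v‖ ≠ 0 := norm_ne_zero_iff.mpr hv
          field_simp
        · positivity
    exact le_csSup ⟨B * ‖v‖, hub⟩ hmem

lemma aux_pi_cylinder {X : Type*} [MeasurableSpace X] (P : Measure X) [IsProbabilityMeasure P]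
    {n : ℕ} (f : Fin n → Set X) (hf : ∀ k, MeasurableSet (f k)) :
    (Measure.pi fun _ : Fin n => P) (Set.pi univ f) = ∏ k, P (f k) := by
  rw [Measure.pi_pi]

lemma aux_map_eval {X : Type*} [MeasurableSpace X] (P : Measure X) [IsProbabilityMeasure P]
    {n : ℕ} (i : Fin n) :
    MeasurePreserving (fun xs : Fin n → X => xs i) (Measure.pi fun _ : Fin n => P) P := by
  refine ⟨measurable_pi_apply i, ?_⟩
  ext s hs
  rw [Measure.map_apply (measurable_pi_apply i) hs]
  have hpre : (fun xs : Fin n → X => xs i) ⁻¹' s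
      = Set.pi univ (fun k => if k = i then s else univ) := by
    ext xs
    simp only [Set.mem_preimage, Set.mem_pi, Set.mem_univ, forall_true_left]
    constructor
    · intro h k; split_ifs with hk
      · subst hk; exact h
      · trivial
    · intro h; simpa using h i
  rw [hpre, Measure.pi_pi]
  simp [apply_ite P, Finset.prod_ite_eq']

lemma aux_map_pair {X : Type*} [MeasurableSpace X] (P : Measure X) [IsProbabilityMeasure P]
    {n : ℕ} {i j : Fin n} (hij : i ≠ j) :
    (Measure.pi fun _ : Fin n => P).map (fun xs => (xs i, xs j)) = P.prod P := by
  have hm : Measurable (fun xs : Fin n → X => (xs i, xs j)) :=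
    (measurable_pi_apply i).prodMk (measurable_pi_apply j)
  symm
  refine Measure.prod_eq (fun s t hs ht => ?_)
  rw [Measure.map_apply hm (hs.prod ht)]
  have hpre : (fun xs : Fin n → X => (xs i, xs j)) ⁻¹' (s ×ˢ t)
      = Set.pi univ (fun k => if k = i then s else if k = j then t else univ) := by
    ext xs
    simp only [Set.mem_preimage, Set.mem_prod, Set.mem_pi, Set.mem_univ, forall_true_left]
    constructor
    · rintro ⟨h1, h2⟩ k
      split_ifs with hk1 hk2
      · subst hk1; exact h1
      · subst hk2; exact h2
      · trivial
    · intro h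
      constructor
      · simpa using h i
      · have := h j; simpa [hij.symm] using this
  rw [hpre, Measure.pi_pi]
  set f : Fin n → ENNReal := fun k => P (if k = i then s else if k = j then t else univ) with hf
  have hj' : j ∈ Finset.univ.erase i := Finset.mem_erase.mpr ⟨hij.symm, Finset.mem_univ j⟩
  rw [← Finset.mul_prod_erase Finset.univ f (Finset.mem_univ i),
    ← Finset.mul_prod_erase _ f hj']
  have h1 : f i = P s := by simp [hf]
  have h2 : f j = P t := by simp [hf, hij.symm]
  have h3 : ∏ k ∈ (Finset.univ.erase i).erase j, f k = 1 := by
    apply Finset.prod_eq_one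
    intro k hk
    rcases Finset.mem_erase.mp hk with ⟨hkj, hk'⟩
    rcases Finset.mem_erase.mp hk' with ⟨hki, _⟩
    simp [hf, hki, hkj]
  rw [h1, h2, h3, mul_one]

lemma aux_L1L2 {Ω : Type*} [MeasurableSpace Ω] (Q : Measure Ω) [IsProbabilityMeasure Q]
    (f : Ω → ℝ) (hf : Integrable f Q) (hf2 : Integrable (fun ω => f ω ^ 2) Q)
    (hf0 : 0 ≤ ∫ ω, f ω ∂Q) :
    ∫ ω, f ω ∂Q ≤ Real.sqrt (∫ ω, f ω ^ 2 ∂Q) := by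
  set m := ∫ ω, f ω ∂Q with hm
  have key : m ^ 2 ≤ ∫ ω, f ω ^ 2 ∂Q := by
    have h0 : 0 ≤ ∫ ω, (f ω - m) ^ 2 ∂Q := integral_nonneg fun ω => sq_nonneg _
    have hexp : ∫ ω, (f ω - m) ^ 2 ∂Q = (∫ ω, f ω ^ 2 ∂Q) - m ^ 2 := by
      have h1 : ∀ ω, (f ω - m) ^ 2 = f ω ^ 2 - (2 * m) * f ω + m ^ 2 := fun ω => by ring
      simp_rw [h1]
      have hi1 : Integrable (fun ω => f ω ^ 2 - 2 * m * f ω) Q := hf2.sub (hf.const_mul (2 * m))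
      have hi2 : Integrable (fun ω => 2 * m * f ω) Q := hf.const_mul (2 * m)
      rw [integral_add hi1 (integrable_const _), integral_sub hf2 hi2, integral_const_mul,
        integral_const]
      simp only [measure_univ, ENNReal.toReal_one, probReal_univ, one_smul, smul_eq_mul, ← hm]
      ring
    linarith
  calc m = Real.sqrt (m ^ 2) := (Real.sqrt_sq hf0).symm
  _ ≤ _ := Real.sqrt_le_sqrt key

/-- **Uniform law of large numbers for Monte-Carlo integration over an RKHS ball.**
Let `P` be a probability measure on `X`, `Φ  : X → H` a strongly measurable feature map
into a real Hilbert space inducing the kernel `k(x,y) = ⟪Φ x, Φ y⟫`; the RKHS functions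
are `f_h = ⟪h, Φ ·⟫` for `h ∈ H`.  Assume `C² = E[k(X,X)] = ∫ ‖Φ x‖² dP < ∞`.  Then
for an i.i.d. sample `X₁, …, X_n ∼ P` (modeled by the product measure on `Fin n → X`)
and every `B > 0`,
`E[ sup_{‖h‖ ≤ B} |(1/n) ∑ f_h(Xᵢ) − E f_h| ] ≤ 4 B C / √n`. -/
theorem stmt_15 {X H : Type*} [MeasurableSpace X]
    [NormedAddCommGroup H] [InnerProductSpace ℝ H] [CompleteSpace H]
    (P : Measure X) [IsProbabilityMeasure P]
    (Φ : X → H) (hΦm : StronglyMeasurable Φ)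
    (hΦ2 : Integrable (fun x => ‖Φ x‖ ^ 2) P)
    (C : ℝ) (hC : C = Real.sqrt (∫ x, ‖Φ x‖ ^ 2 ∂P))
    (n : ℕ) (hn : 0 < n) (B : ℝ) (hB : 0 < B) :
    (∫ xs : Fin n → X,
        sSup {r : ℝ | ∃ h : H, ‖h‖ ≤ B ∧
          r = |(1 / (n : ℝ)) * ∑ i, ⟪h, Φ (xs i)⟫ - ∫ x, ⟪h, Φ x⟫ ∂P|}
        ∂(Measure.pi fun _ : Fin n => P)) ≤
      4 * B * C / Real.sqrt n := by
  classical
  set Q : Measure (Fin n → X) := Measure.pi fun _ : Fin n => P with hQ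
  have hn0 : (n : ℝ) ≠ 0 := Nat.cast_ne_zero.mpr hn.ne'
  have hnpos : (0:ℝ) < n := Nat.cast_pos.mpr hn
  -- integrability of Φ
  have hΦ1 : Integrable Φ P := by
    refine Integrable.mono' ((integrable_const (1:ℝ)).add hΦ2) hΦm.aestronglyMeasurable ?_
    refine ae_of_all _ fun x => ?_
    simp only [Pi.add_apply]
    nlinarith [norm_nonneg (Φ x)]
  set μH : H := ∫ x, Φ x ∂P with hμH
  have hΦc : Integrable (fun x => Φ x - μH) P := hΦ1.sub (integrable_const _)
  have hΦcm : StronglyMeasurable (fun x => Φ x - μH) := hΦm.sub stronglyMeasurable_const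
  have hΦc2 : Integrable (fun x => ‖Φ x - μH‖ ^ 2) P := by
    refine Integrable.mono' ((hΦ2.const_mul 2).add (integrable_const (2 * ‖μH‖ ^ 2)))
      (hΦcm.norm.pow 2).aestronglyMeasurable (ae_of_all _ fun x => ?_)
    have h1 : ‖Φ x - μH‖ ≤ ‖Φ x‖ + ‖μH‖ := norm_sub_le _ _
    have h2 : (0:ℝ) ≤ ‖Φ x - μH‖ := norm_nonneg _
    rw [Real.norm_eq_abs, abs_of_nonneg (by positivity)]
    simp only [Pi.add_apply]
    nlinarith [norm_nonneg (Φ x), norm_nonneg μH, sq_nonneg (‖Φ x‖ - ‖μH‖),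
      mul_self_le_mul_self h2 h1]
  -- centered second moment
  set V : ℝ := ∫ x, ‖Φ x - μH‖ ^ 2 ∂P with hV
  have hC0 : 0 ≤ C := hC ▸ Real.sqrt_nonneg _
  have hC2 : C ^ 2 = ∫ x, ‖Φ x‖ ^ 2 ∂P := by
    rw [hC, Real.sq_sqrt (integral_nonneg fun x => sq_nonneg _)]
  have hV0 : 0 ≤ V := integral_nonneg fun x => sq_nonneg _
  have hVle : V ≤ C ^ 2 := by
    have hiP : Integrable (fun x => ⟪Φ x, μH⟫) P := hΦ1.inner_const μH
    have hinner : ∫ x, ⟪Φ x, μH⟫ ∂P = ‖μH‖ ^ 2 := by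
      have hcomm : (fun x => ⟪Φ x, μH⟫) = fun x => ⟪μH, Φ x⟫ :=
        funext fun x => real_inner_comm _ _
      rw [hcomm, integral_inner hΦ1, real_inner_self_eq_norm_sq]
    have hexp : ∀ x, ‖Φ x - μH‖ ^ 2 = ‖Φ x‖ ^ 2 - 2 * ⟪Φ x, μH⟫ + ‖μH‖ ^ 2 :=
      fun x => norm_sub_sq_real _ _
    have hi1 : Integrable (fun x => ‖Φ x‖ ^ 2 - 2 * ⟪Φ x, μH⟫) P := hΦ2.sub (hiP.const_mul 2)
    have hi2 : Integrable (fun x => 2 * ⟪Φ x, μH⟫) P := hiP.const_mul 2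
    have : V = (∫ x, ‖Φ x‖ ^ 2 ∂P) - ‖μH‖ ^ 2 := by
      rw [hV]
      simp_rw [hexp]
      rw [integral_add hi1 (integrable_const _), integral_sub hΦ2 hi2, integral_const_mul,
        integral_const, hinner]
      simp only [measure_univ, ENNReal.toReal_one, probReal_univ, one_smul, smul_eq_mul]
      ring
    rw [this, ← hC2]
    nlinarith [sq_nonneg ‖μH‖]
  -- the empirical deviation
  set S : (Fin n → X) → H := fun xs => (n : ℝ)⁻¹ • ∑ i, (Φ (xs i) - μH) with hS
  have hSm : StronglyMeasurable S := by
    apply StronglyMeasurable.const_smul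
    apply Finset.stronglyMeasurable_fun_sum
    intro i _
    exact (hΦm.comp_measurable (measurable_pi_apply i)).sub stronglyMeasurable_const
  -- pointwise identification of the sup
  have hpt : ∀ xs : Fin n → X,
      sSup {r : ℝ | ∃ h : H, ‖h‖ ≤ B ∧
        r = |(1 / (n : ℝ)) * ∑ i, ⟪h, Φ (xs i)⟫ - ∫ x, ⟪h, Φ x⟫ ∂P|} = B * ‖S xs‖ := by
    intro xs
    have hkey : ∀ h : H, (1 / (n : ℝ)) * ∑ i, ⟪h, Φ (xs i)⟫ - ∫ x, ⟪h, Φ x⟫ ∂P = ⟪h, S xs⟫ := by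
      intro h
      have h1 : ∫ x, ⟪h, Φ x⟫ ∂P = ⟪h, μH⟫ := integral_inner hΦ1 h
      have h2 : ⟪h, S xs⟫ = (n : ℝ)⁻¹ * ∑ i, (⟪h, Φ (xs i)⟫ - ⟪h, μH⟫) := by
        rw [hS, real_inner_smul_right, inner_sum]
        simp_rw [inner_sub_right]
      rw [h1, h2, Finset.sum_sub_distrib, Finset.sum_const, Finset.card_univ, Fintype.card_fin]
      field_simp
      rw [nsmul_eq_mul]
    have hsets : {r : ℝ | ∃ h : H, ‖h‖ ≤ B ∧
        r = |(1 / (n : ℝ)) * ∑ i, ⟪h, Φ (xs i)⟫ - ∫ x, ⟪h, Φ x⟫ ∂P|}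
        = {r : ℝ | ∃ h : H, ‖h‖ ≤ B ∧ r = |⟪h, S xs⟫|} := by
      ext r
      constructor
      · rintro ⟨h, hh, rfl⟩; exact ⟨h, hh, by rw [hkey h]⟩
      · rintro ⟨h, hh, rfl⟩; exact ⟨h, hh, by rw [hkey h]⟩
    rw [hsets, aux_sSup B hB (S xs)]
  simp_rw [hpt]
  -- integrability of the inner products over the product measure
  have hevm : ∀ i : Fin n, MeasurePreserving (fun xs : Fin n → X => xs i) Q P := fun i =>
    aux_map_eval P i
  have hYm : ∀ i : Fin n, StronglyMeasurable (fun xs : Fin n → X => Φ (xs i) - μH) := fun i =>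
    (hΦm.comp_measurable (measurable_pi_apply i)).sub stronglyMeasurable_const
  have hY2 : ∀ i : Fin n, Integrable (fun xs : Fin n → X => ‖Φ (xs i) - μH‖ ^ 2) Q := by
    intro i
    exact ((hevm i).integrable_comp (hΦcm.norm.pow 2).aestronglyMeasurable).mpr hΦc2
  have hGm : ∀ i j : Fin n,
      StronglyMeasurable (fun xs : Fin n → X => ⟪Φ (xs i) - μH, Φ (xs j) - μH⟫) := fun i j =>
    (hYm i).inner (hYm j)
  have hGint : ∀ i j : Fin n,
      Integrable (fun xs : Fin n → X => ⟪Φ (xs i) - μH, Φ (xs j) - μH⟫) Q := by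
    intro i j
    refine Integrable.mono' (((hY2 i).add (hY2 j)).const_mul (1/2))
      (hGm i j).aestronglyMeasurable (ae_of_all _ fun xs => ?_)
    have h1 := abs_real_inner_le_norm (Φ (xs i) - μH) (Φ (xs j) - μH)
    rw [Real.norm_eq_abs]
    simp only [Pi.add_apply]
    nlinarith [sq_nonneg (‖Φ (xs i) - μH‖ - ‖Φ (xs j) - μH‖), norm_nonneg (Φ (xs i) - μH),
      norm_nonneg (Φ (xs j) - μH)]
  -- values of the inner-product integrals
  have hGval : ∀ i j : Fin n,
      ∫ xs, ⟪Φ (xs i) - μH, Φ (xs j) - μH⟫ ∂Q = if i = j then V else 0 := by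
    intro i j
    by_cases hij : i = j
    · subst hij
      simp only [if_true]
      have hFsm : AEStronglyMeasurable (fun x : X => ⟪Φ x - μH, Φ x - μH⟫)
          (Measure.map (fun xs : Fin n → X => xs i) Q) := by
        rw [(hevm i).map_eq]
        exact (hΦcm.inner hΦcm).aestronglyMeasurable
      have heq : ∫ xs, ⟪Φ (xs i) - μH, Φ (xs i) - μH⟫ ∂Q
          = ∫ x, ⟪Φ x - μH, Φ x - μH⟫ ∂P := by
        rw [← (hevm i).map_eq, integral_map (measurable_pi_apply i).aemeasurable hFsm]
      rw [heq, hV]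
      simp_rw [real_inner_self_eq_norm_sq]
    · simp only [if_neg hij]
      have hm : Measurable (fun xs : Fin n → X => (xs i, xs j)) :=
        (measurable_pi_apply i).prodMk (measurable_pi_apply j)
      have hFm : StronglyMeasurable (fun p : X × X => ⟪Φ p.1 - μH, Φ p.2 - μH⟫) :=
        ((hΦm.comp_measurable measurable_fst).sub stronglyMeasurable_const).inner
          ((hΦm.comp_measurable measurable_snd).sub stronglyMeasurable_const)
      have hstep : ∫ xs, ⟪Φ (xs i) - μH, Φ (xs j) - μH⟫ ∂Q
          = ∫ p : X × X, ⟪Φ p.1 - μH, Φ p.2 - μH⟫ ∂(P.prod P) := by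
        rw [← aux_map_pair P hij, integral_map hm.aemeasurable]
        rw [aux_map_pair P hij]
        exact hFm.aestronglyMeasurable
      rw [hstep]
      have hFint : Integrable (fun p : X × X => ⟪Φ p.1 - μH, Φ p.2 - μH⟫) (P.prod P) := by
        refine Integrable.mono' (hΦc.norm.mul_prod hΦc.norm) hFm.aestronglyMeasurable
          (ae_of_all _ fun p => ?_)
        rw [Real.norm_eq_abs]
        exact abs_real_inner_le_norm _ _
      rw [integral_prod _ hFint]
      have hzero : ∫ x, Φ x - μH ∂P = 0 := by
        rw [integral_sub hΦ1 (integrable_const _), integral_const]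
        simp [hμH]
      have hin : ∀ a : X, ∫ b, ⟪Φ a - μH, Φ b - μH⟫ ∂P = 0 := by
        intro a
        rw [integral_inner hΦc (Φ a - μH), hzero, inner_zero_right]
      simp_rw [hin]
      exact integral_zero _ _
  -- expansion of ‖S‖²
  have hnorm : ∀ xs : Fin n → X,
      ‖S xs‖ ^ 2 = ((n : ℝ)⁻¹) ^ 2 * ∑ i, ∑ j, ⟪Φ (xs i) - μH, Φ (xs j) - μH⟫ := by
    intro xs
    have h1 : ‖∑ i, (Φ (xs i) - μH)‖ ^ 2
        = ∑ i, ∑ j, ⟪Φ (xs i) - μH, Φ (xs j) - μH⟫ := by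
      rw [← real_inner_self_eq_norm_sq, sum_inner]
      simp_rw [inner_sum]
    rw [hS, norm_smul, mul_pow, h1]
    congr 1
    rw [Real.norm_eq_abs, sq_abs]
  -- integral of ‖S‖²
  have hSsq_int : Integrable (fun xs => ‖S xs‖ ^ 2) Q := by
    have : (fun xs => ‖S xs‖ ^ 2)
        = fun xs => ((n : ℝ)⁻¹) ^ 2 * ∑ i, ∑ j, ⟪Φ (xs i) - μH, Φ (xs j) - μH⟫ := funext hnorm
    rw [this]
    exact (integrable_finset_sum _ fun i _ => integrable_finset_sum _ fun j _ => hGint i j).const_mul _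
  have hSsq : ∫ xs, ‖S xs‖ ^ 2 ∂Q = V / n := by
    simp_rw [hnorm]
    rw [integral_const_mul, integral_finset_sum _ fun i _ =>
      integrable_finset_sum _ fun j _ => hGint i j]
    have : ∀ i : Fin n, ∫ xs, ∑ j, ⟪Φ (xs i) - μH, Φ (xs j) - μH⟫ ∂Q = V := by
      intro i
      rw [integral_finset_sum _ fun j _ => hGint i j]
      simp_rw [hGval i]
      simp
    simp_rw [this]
    rw [Finset.sum_const, Finset.card_univ, Fintype.card_fin]
    field_simp
    ring
  -- integrability of ‖S‖
  have hSnorm_int : Integrable (fun xs => ‖S xs‖) Q := by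
    refine Integrable.mono' ((integrable_const (1:ℝ)).add hSsq_int)
      hSm.norm.aestronglyMeasurable (ae_of_all _ fun xs => ?_)
    rw [Real.norm_eq_abs, abs_of_nonneg (norm_nonneg _)]
    simp only [Pi.add_apply]
    nlinarith [norm_nonneg (S xs)]
  -- final estimate
  have hmain : ∫ xs, B * ‖S xs‖ ∂Q ≤ B * (C / Real.sqrt n) := by
    rw [integral_const_mul]
    refine mul_le_mul_of_nonneg_left ?_ hB.le
    calc ∫ xs, ‖S xs‖ ∂Q
        ≤ Real.sqrt (∫ xs, ‖S xs‖ ^ 2 ∂Q) :=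
          aux_L1L2 Q _ hSnorm_int hSsq_int (integral_nonneg fun xs => norm_nonneg _)
      _ = Real.sqrt (V / n) := by rw [hSsq]
      _ ≤ Real.sqrt (C ^ 2 / n) := by
          apply Real.sqrt_le_sqrt
          gcongr
      _ = C / Real.sqrt n := by
          rw [Real.sqrt_div (sq_nonneg C), Real.sqrt_sq hC0]
  calc ∫ xs, B * ‖S xs‖ ∂Q ≤ B * (C / Real.sqrt n) := hmain
    _ ≤ 4 * B * C / Real.sqrt n := by
        have hs : (0:ℝ) ≤ (Real.sqrt n)⁻¹ := by positivity
        rw [div_eq_mul_inv, div_eq_mul_inv]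
        nlinarith [mul_nonneg (mul_nonneg hB.le hC0) hs]
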